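/- Let X be a Coxeter graph satisfying condition (★) and let x, w ∈ W_c(X) with x ≤ w. Then a_{x,w}(q) = (−1)^{ℓ(x)} (−1)^{ℓ(w)} R_{x,w}(q) + Σ_{y ∉ W_c(X), x < y < w} (−1)^{ℓ(y)} (−1)^{ℓ(w)} R_{y,w}(q) D_{x,y}(q). -/

import Mathlib

/-!
Common setup: Coxeter systems, Bruhat order, fully commutative elements,
the Hecke algebra `H(X)`, the generalized Temperley--Lieb algebra `TL(X)`,
and the polynomial families `R`, `P` (Kazhdan--Lusztig), `D`, `a`, `L`.
-/

open LaurentPolynomial Polynomial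

noncomputable section

namespace TLPaper

/-- The ring `A = ℤ[q^{1/2}, q^{-1/2}]`, modelled as Laurent polynomials over `ℤ`
in the variable `T = q^{1/2}`. -/
abbrev A : Type := LaurentPolynomial ℤ

/-- The element `q = (q^{1/2})^2` of `A`. -/
def q : A := LaurentPolynomial.T 2

variable {B : Type*} {W : Type*} [Group W] {M : CoxeterMatrix B} (cs : CoxeterSystem M W)

/-- The Bruhat order on a Coxeter group: the reflexive-transitive closure of the relation
`x → xt` where `t` is a reflection and the length increases. -/
def bruhatLE : W → W → Prop :=
  Relation.ReflTransGen
    (fun x y => (∃ t : W, cs.IsReflection t ∧ y = x * t) ∧ cs.length x < cs.length y)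

/-- Strict Bruhat order. -/
def bruhatLT (x w : W) : Prop := bruhatLE cs x w ∧ x ≠ w

/-- A single commutation move on words: interchanging two adjacent commuting letters
(i.e. letters `i`, `j` with `M i j = 2`). -/
def CommMove (M : CoxeterMatrix B) (l₁ l₂ : List B) : Prop :=
  ∃ (a b : List B) (i j : B), M i j = 2 ∧ l₁ = a ++ i :: j :: b ∧ l₂ = a ++ j :: i :: b

/-- An element `w` is *fully commutative* if any reduced word for `w` can be obtained
from any other by a sequence of commutation moves. -/
def FullyCommutative (w : W) : Prop :=
  ∀ l₁ l₂ : List B, (cs.IsReduced l₁ ∧ cs.wordProd l₁ = w) →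
    (cs.IsReduced l₂ ∧ cs.wordProd l₂ = w) →
    Relation.ReflTransGen (CommMove M) l₁ l₂

/-- All the data of the paper: the Hecke algebra `H` of the Coxeter system `cs` with its
standard basis `Tw`, the `R`-polynomials, the Kazhdan--Lusztig polynomials `P`,
the generalized Temperley--Lieb algebra `TL = H/J` (with `proj` the canonical projection),
the `D`-polynomials, the `a`-polynomials, and the IC basis `c` with its `L`-polynomials.
The polynomial `L x w` is a polynomial in the variable `v = q^{-1/2}`;
all other polynomial families are polynomials in `q`. -/
structure TLContext {B : Type*} {W : Type*} [Group W] {M : CoxeterMatrix B}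
    (cs : CoxeterSystem M W)
    (H : Type*) [Ring H] [Algebra A H] (TL : Type*) [Ring TL] [Algebra A TL] where
  /-- The standard basis `{T_w}` of the Hecke algebra. -/
  Tw : W → H
  Tw_indep : LinearIndependent A Tw
  Tw_span : Submodule.span A (Set.range Tw) = ⊤
  Tw_one : Tw 1 = 1
  /-- Multiplication rule, case `ℓ(ws) > ℓ(w)`. -/
  Tw_mul_simple_of_lt : ∀ (w : W) (i : B),
    cs.length w < cs.length (w * cs.simple i) →
    Tw w * Tw (cs.simple i) = Tw (w * cs.simple i)
  /-- Multiplication rule, case `ℓ(ws) < ℓ(w)`. -/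
  Tw_mul_simple_of_gt : ∀ (w : W) (i : B),
    cs.length (w * cs.simple i) < cs.length w →
    Tw w * Tw (cs.simple i) = q • Tw (w * cs.simple i) + (q - 1) • Tw w
  /-- `Tinv w` is the inverse of `T_w` in `H`. -/
  Tinv : W → H
  Tw_mul_Tinv : ∀ w : W, Tw w * Tinv w = 1
  Tinv_mul_Tw : ∀ w : W, Tinv w * Tw w = 1
  /-- Bruhat lower sets are finite. -/
  finite_bruhatLE : ∀ w : W, {x | bruhatLE cs x w}.Finite
  /-- The `R`-polynomials. -/
  R : W → W → Polynomial ℤ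
  R_self : ∀ w : W, R w w = 1
  R_eq_zero : ∀ x w : W, ¬ bruhatLE cs x w → R x w = 0
  /-- `T_{w⁻¹}⁻¹ = ε_w q^{-ℓ(w)} Σ_{x ≤ w} ε_x R_{x,w}(q) T_x`. -/
  Tinv_eq : ∀ w : W, Tinv w⁻¹ =
    ((-1 : A) ^ cs.length w * LaurentPolynomial.T (-2 * (cs.length w : ℤ))) •
      ∑ᶠ x ∈ {x | bruhatLE cs x w},
        ((-1 : A) ^ cs.length x * Polynomial.aeval q (R x w)) • Tw x
  /-- The Kazhdan--Lusztig polynomials. -/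
  P : W → W → Polynomial ℤ
  P_self : ∀ w : W, P w w = 1
  P_eq_zero : ∀ x w : W, ¬ bruhatLE cs x w → P x w = 0
  /-- `deg P_{x,w} ≤ (ℓ(w) - ℓ(x) - 1)/2` for `x < w`. -/
  P_degree : ∀ x w : W, bruhatLT cs x w →
    2 * (P x w).natDegree + 1 ≤ cs.length w - cs.length x
  /-- The involution `ι` of the Hecke algebra. -/
  iotaH : H →+* H
  iotaH_involutive : ∀ h : H, iotaH (iotaH h) = h
  iotaH_Tw : ∀ w : W, iotaH (Tw w) = Tinv w⁻¹
  iotaH_smul : ∀ (a : A) (h : H),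
    iotaH (a • h) = (LaurentPolynomial.invert (R := ℤ) a) • iotaH h
  /-- `ι` fixes the Kazhdan--Lusztig basis element
  `C'_w = q^{-ℓ(w)/2} Σ_{x ≤ w} P_{x,w}(q) T_x`. -/
  iotaH_KL : ∀ w : W,
    iotaH ((LaurentPolynomial.T (-(cs.length w : ℤ)) : A) •
      ∑ᶠ x ∈ {x | bruhatLE cs x w}, (Polynomial.aeval q (P x w)) • Tw x) =
    (LaurentPolynomial.T (-(cs.length w : ℤ)) : A) •
      ∑ᶠ x ∈ {x | bruhatLE cs x w}, (Polynomial.aeval q (P x w)) • Tw x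
  /-- The canonical projection `σ : H → TL = H/J`. -/
  proj : H →ₐ[A] TL
  proj_surjective : Function.Surjective proj
  /-- The kernel of `σ` is the two-sided ideal `J` generated by the elements
  `Σ_{w ∈ ⟨s_i, s_j⟩} T_w`, over all pairs of non-commuting generators `s_i, s_j`
  such that `s_i s_j` has finite order. -/
  proj_ker : ∀ h : H, proj h = 0 ↔ h ∈ Submodule.span A
    {x : H | ∃ (i j : B) (a b : H), M i j ≠ 0 ∧ M i j ≠ 1 ∧ M i j ≠ 2 ∧
      x = a * (∑ᶠ u ∈ (Subgroup.closure {cs.simple i, cs.simple j} : Set W), Tw u) * b}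
  /-- The images `t_w = σ(T_w)`, `w` fully commutative, are linearly independent. -/
  t_indep : LinearIndependent A
    (fun x : {w : W // FullyCommutative cs w} => proj (Tw x.1))
  /-- The `D`-polynomials. -/
  D : W → W → Polynomial ℤ
  /-- `t_w = Σ_{x ∈ W_c, x ≤ w} D_{x,w}(q) t_x`. -/
  D_eq : ∀ w : W, proj (Tw w) =
    ∑ᶠ x ∈ {x | FullyCommutative cs x ∧ bruhatLE cs x w},
      (Polynomial.aeval q (D x w)) • proj (Tw x)
  D_self : ∀ w : W, FullyCommutative cs w → D w w = 1
  D_eq_zero : ∀ x w : W, ¬ (FullyCommutative cs x ∧ bruhatLE cs x w) → D x w = 0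
  /-- The `a`-polynomials. -/
  apol : W → W → Polynomial ℤ
  /-- `(t_{w⁻¹})⁻¹ = q^{-ℓ(w)} Σ_{y ∈ W_c, y ≤ w} a_{y,w}(q) t_y` for `w ∈ W_c`. -/
  apol_eq : ∀ w : W, FullyCommutative cs w →
    proj (Tinv w⁻¹) = (LaurentPolynomial.T (-2 * (cs.length w : ℤ)) : A) •
      ∑ᶠ y ∈ {y | FullyCommutative cs y ∧ bruhatLE cs y w},
        (Polynomial.aeval q (apol y w)) • proj (Tw y)
  apol_self : ∀ w : W, FullyCommutative cs w → apol w w = 1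
  apol_eq_zero : ∀ y w : W,
    ¬ (FullyCommutative cs y ∧ FullyCommutative cs w ∧ bruhatLE cs y w) → apol y w = 0
  /-- The involution `ι` of the Temperley--Lieb algebra. -/
  iotaTL : TL →+* TL
  iotaTL_involutive : ∀ x : TL, iotaTL (iotaTL x) = x
  iotaTL_t : ∀ w : W, iotaTL (proj (Tw w)) = proj (Tinv w⁻¹)
  iotaTL_smul : ∀ (a : A) (x : TL),
    iotaTL (a • x) = (LaurentPolynomial.invert (R := ℤ) a) • iotaTL x
  /-- The `L`-polynomials: `L x w` is a polynomial in the variable `v = q^{-1/2}`, and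
  `L_{x,w}(q^{-1/2})` is obtained by evaluating it at `T (-1) = q^{-1/2}`. -/
  L : W → W → Polynomial ℤ
  /-- The IC basis `{c_w}` of `TL`. -/
  c : W → TL
  /-- `c_w = Σ_{x ∈ W_c, x ≤ w} q^{-ℓ(x)/2} L_{x,w}(q^{-1/2}) t_x`. -/
  c_eq : ∀ w : W, FullyCommutative cs w →
    c w = ∑ᶠ x ∈ {x | FullyCommutative cs x ∧ bruhatLE cs x w},
      ((LaurentPolynomial.T (-(cs.length x : ℤ)) : A) *
        Polynomial.aeval (R := ℤ) ((LaurentPolynomial.T (-1) : A)) (L x w)) • proj (Tw x)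
  /-- Convention: `c_x = 0` for `x ∉ W_c`. -/
  c_eq_zero : ∀ w : W, ¬ FullyCommutative cs w → c w = 0
  /-- The IC basis is `ι`-invariant. -/
  c_invariant : ∀ w : W, FullyCommutative cs w → iotaTL (c w) = c w
  L_self : ∀ w : W, L w w = 1
  L_eq_zero : ∀ x w : W,
    ¬ (FullyCommutative cs x ∧ FullyCommutative cs w ∧ bruhatLE cs x w) → L x w = 0
  /-- `L_{x,w}(q^{-1/2}) ∈ q^{-1/2} ℤ[q^{-1/2}]` for `x < w`. -/
  L_coeff_zero : ∀ x w : W, bruhatLT cs x w → (L x w).coeff 0 = 0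

namespace TLContext

variable {B : Type*} {W : Type*} [Group W] {M : CoxeterMatrix B} {cs : CoxeterSystem M W}
  {H : Type*} [Ring H] [Algebra A H] {TL : Type*} [Ring TL] [Algebra A TL]
  (Ctx : TLContext cs H TL)

/-- `μ(x,w)`: the coefficient of `q^{(ℓ(w)-ℓ(x)-1)/2}` in the Kazhdan--Lusztig
polynomial `P_{x,w}(q)` (which is zero unless `ℓ(w) - ℓ(x)` is odd). -/
def mu (x w : W) : ℤ :=
  if Odd (cs.length w - cs.length x) then
    (Ctx.P x w).coeff ((cs.length w - cs.length x - 1) / 2)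
  else 0

/-- The Kazhdan--Lusztig basis element `C'_w = q^{-ℓ(w)/2} Σ_{x ≤ w} P_{x,w}(q) T_x`. -/
def KL (w : W) : H :=
  (LaurentPolynomial.T (-(cs.length w : ℤ)) : A) •
    ∑ᶠ x ∈ {x | bruhatLE cs x w}, (Polynomial.aeval q (Ctx.P x w)) • Ctx.Tw x

/-- Condition (★): the projection sends the Kazhdan--Lusztig basis element `C'_w`
to `c_w` if `w ∈ W_c` and to `0` otherwise. -/
def Star : Prop :=
  (∀ w : W, FullyCommutative cs w → Ctx.proj (Ctx.KL w) = Ctx.c w) ∧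
  (∀ w : W, ¬ FullyCommutative cs w → Ctx.proj (Ctx.KL w) = 0)

/-- `L_{x,w}(q^{-1/2})` as an element of `A`. -/
def Lq (x w : W) : A := Polynomial.aeval (R := ℤ) ((LaurentPolynomial.T (-1) : A)) (Ctx.L x w)

/-- `L_{x,w}(q^{1/2})` as an element of `A`. -/
def Lq' (x w : W) : A := Polynomial.aeval (R := ℤ) ((LaurentPolynomial.T 1 : A)) (Ctx.L x w)

end TLContext

/-! ### Auxiliary lemmas for the proof of `statement10` -/

lemma aeval_q_eq (p : Polynomial ℤ) :
    Polynomial.aeval q p = Polynomial.toLaurent (p.comp (Polynomial.X ^ 2)) := by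
  induction p using Polynomial.induction_on' with
  | add p r hp hr => simp [hp, hr, Polynomial.add_comp]
  | monomial n a =>
    rw [Polynomial.aeval_monomial]
    rw [show (Polynomial.monomial n a) = Polynomial.C a * Polynomial.X ^ n by
      rw [Polynomial.C_mul_X_pow_eq_monomial]]
    rw [Polynomial.mul_comp, Polynomial.C_comp, Polynomial.pow_comp, Polynomial.X_comp,
      ← pow_mul, Polynomial.toLaurent_C_mul_X_pow]
    rw [q, LaurentPolynomial.T_pow]
    have : (algebraMap ℤ A) a = LaurentPolynomial.C a := by
      exact (eq_intCast (algebraMap ℤ A) a).trans (eq_intCast (LaurentPolynomial.C : ℤ →+* A) a).symm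
    rw [this]
    norm_num [mul_comm]

lemma aeval_q_injective : Function.Injective (fun p : Polynomial ℤ => Polynomial.aeval q p) := by
  intro p r h
  simp only [aeval_q_eq] at h
  have h2 := Polynomial.toLaurent_injective h
  have h3 : (p - r).comp (Polynomial.X ^ 2) = 0 := by
    rw [Polynomial.sub_comp, h2, sub_self]
  rcases Polynomial.comp_eq_zero_iff.mp h3 with h4 | ⟨_, h4⟩
  · exact sub_eq_zero.mp h4
  · exfalso
    have := congrArg Polynomial.natDegree h4
    simp at this

section Aux

variable {B : Type*} {W : Type*} [Group W] {M : CoxeterMatrix B} {cs : CoxeterSystem M W}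
  {H : Type*} [Ring H] [Algebra A H] {TL : Type*} [Ring TL] [Algebra A TL]
  (Ctx : TLContext cs H TL)

/-- Transitivity of the Bruhat order. -/
lemma bruhatLE_trans {x y z : W} (h1 : bruhatLE cs x y) (h2 : bruhatLE cs y z) :
    bruhatLE cs x z := Relation.ReflTransGen.trans h1 h2

lemma bruhatLE_refl (x : W) : bruhatLE cs x x := Relation.ReflTransGen.refl

/-- Coefficient extraction: the `t_x`, `x` fully commutative, are linearly independent. -/
lemma coeff_ext (s : Finset W) (hs : ∀ y ∈ s, FullyCommutative cs y)
    (f : W → A) (h : ∑ y ∈ s, f y • Ctx.proj (Ctx.Tw y) = 0) :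
    ∀ y ∈ s, f y = 0 := by
  classical
  have hind := linearIndependent_iff'.mp Ctx.t_indep
  have key := hind (s.subtype (FullyCommutative cs)) (fun x => f x.1) ?_
  · intro y hy
    exact key ⟨y, hs y hy⟩ (Finset.mem_subtype.mpr hy)
  · show ∑ i ∈ s.subtype (FullyCommutative cs),
        (fun a => f a • Ctx.proj (Ctx.Tw a)) i.1 = 0
    rw [Finset.sum_subtype_eq_sum_filter (fun a => f a • Ctx.proj (Ctx.Tw a)),
      Finset.filter_true_of_mem hs]
    exact h

/-- `D x y = 0` whenever `y` is fully commutative and `x ≠ y`. -/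
lemma D_vanish {x y : W} (hy : FullyCommutative cs y) (hxy : x ≠ y) : Ctx.D x y = 0 := by
  classical
  by_cases hmem : FullyCommutative cs x ∧ bruhatLE cs x y
  · have hfin : {x' | FullyCommutative cs x' ∧ bruhatLE cs x' y}.Finite :=
      (Ctx.finite_bruhatLE y).subset (fun _ h => h.2)
    set Fy : Finset W := hfin.toFinset with hFy
    have hDy : Ctx.proj (Ctx.Tw y) = ∑ x' ∈ Fy, (Polynomial.aeval q (Ctx.D x' y)) •
        Ctx.proj (Ctx.Tw x') := by
      rw [Ctx.D_eq y, finsum_mem_eq_finite_toFinset_sum _ hfin]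
    have hymem : y ∈ Fy := by
      rw [hFy, Set.Finite.mem_toFinset]
      exact ⟨hy, bruhatLE_refl y⟩
    have hsum : ∑ x' ∈ Fy,
        ((Polynomial.aeval q (Ctx.D x' y)) - (if x' = y then (1 : A) else 0)) •
          Ctx.proj (Ctx.Tw x') = 0 := by
      simp only [sub_smul, Finset.sum_sub_distrib, ← hDy, ite_smul, one_smul, zero_smul]
      rw [Finset.sum_ite_eq' Fy y (fun x' => Ctx.proj (Ctx.Tw x'))]
      simp [hymem]
    have hall := coeff_ext Ctx Fy
      (fun x' hx' => ((Set.Finite.mem_toFinset hfin).mp hx').1) _ hsum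
    have hx'mem : x ∈ Fy := by
      rw [hFy, Set.Finite.mem_toFinset]; exact hmem
    have := hall x hx'mem
    rw [if_neg hxy, sub_zero] at this
    have : Polynomial.aeval q (Ctx.D x y) = Polynomial.aeval q (0 : Polynomial ℤ) := by
      simpa using this
    exact aeval_q_injective this
  · exact Ctx.D_eq_zero x y hmem

end Aux

/-- Proposition (paper, Prop. `c-apol`): if `X` satisfies (★) and `x, w ∈ W_c` with
`x ≤ w`, then `a_{x,w}(q) = ε_x ε_w R_{x,w}(q) +
Σ_{y ∉ W_c, x < y < w} ε_y ε_w R_{y,w}(q) D_{x,y}(q)`. -/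
theorem statement10 {B : Type*} {W : Type*} [Group W] {M : CoxeterMatrix B} {cs : CoxeterSystem M W}
    {H : Type*} [Ring H] [Algebra A H] {TL : Type*} [Ring TL] [Algebra A TL]
    (Ctx : TLContext cs H TL)
    (hstar : Ctx.Star) (x w : W)
    (hx : FullyCommutative cs x) (hw : FullyCommutative cs w)
    (hxw : bruhatLE cs x w) :
    Ctx.apol x w =
      (-1 : Polynomial ℤ) ^ cs.length x * (-1 : Polynomial ℤ) ^ cs.length w *
        Ctx.R x w +
      ∑ᶠ y ∈ {y | ¬ FullyCommutative cs y ∧ bruhatLT cs x y ∧ bruhatLT cs y w},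
        (-1 : Polynomial ℤ) ^ cs.length y * (-1 : Polynomial ℤ) ^ cs.length w *
          Ctx.R y w * Ctx.D x y := by
  classical
  have hSw : {y | bruhatLE cs y w}.Finite := Ctx.finite_bruhatLE w
  set SF : Finset W := hSw.toFinset with hSF
  have hFcset : {x' | FullyCommutative cs x' ∧ bruhatLE cs x' w}.Finite :=
    hSw.subset (fun _ h => h.2)
  set FF : Finset W := hFcset.toFinset with hFF
  -- Step 1: expand `proj (Tinv w⁻¹)` via the R-polynomials
  have e1 : Ctx.proj (Ctx.Tinv w⁻¹) = ∑ y ∈ SF,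
      (((-1 : A) ^ cs.length w * LaurentPolynomial.T (-2 * (cs.length w : ℤ))) *
        ((-1 : A) ^ cs.length y * Polynomial.aeval q (Ctx.R y w))) • Ctx.proj (Ctx.Tw y) := by
    rw [Ctx.Tinv_eq w, finsum_mem_eq_finite_toFinset_sum _ hSw, map_smul, map_sum,
      Finset.smul_sum]
    simp only [map_smul, smul_smul]
    rfl
  -- Step 2: expand each `proj (Tw y)` via the D-polynomials
  have e2 : ∀ y, bruhatLE cs y w → Ctx.proj (Ctx.Tw y) =
      ∑ x' ∈ FF, (Polynomial.aeval q (Ctx.D x' y)) • Ctx.proj (Ctx.Tw x') := by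
    intro y hyw
    have hfin : {x' | FullyCommutative cs x' ∧ bruhatLE cs x' y}.Finite :=
      (Ctx.finite_bruhatLE y).subset (fun _ h => h.2)
    rw [Ctx.D_eq y, finsum_mem_eq_finite_toFinset_sum _ hfin]
    refine Finset.sum_subset ?_ ?_
    · intro x' hx'
      rw [Set.Finite.mem_toFinset] at hx'
      rw [hFF, Set.Finite.mem_toFinset]
      exact ⟨hx'.1, bruhatLE_trans hx'.2 hyw⟩
    · intro x' _ hx'
      rw [Set.Finite.mem_toFinset] at hx'
      rw [Ctx.D_eq_zero x' y hx']
      simp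
  -- Step 3: combine
  have e3 : Ctx.proj (Ctx.Tinv w⁻¹) = ∑ x' ∈ FF, (∑ y ∈ SF,
      ((-1 : A) ^ cs.length w * LaurentPolynomial.T (-2 * (cs.length w : ℤ)) *
        ((-1 : A) ^ cs.length y * Polynomial.aeval q (Ctx.R y w)) *
        Polynomial.aeval q (Ctx.D x' y))) • Ctx.proj (Ctx.Tw x') := by
    rw [e1]
    calc ∑ y ∈ SF, (((-1 : A) ^ cs.length w * LaurentPolynomial.T (-2 * (cs.length w : ℤ))) *
            ((-1 : A) ^ cs.length y * Polynomial.aeval q (Ctx.R y w))) • Ctx.proj (Ctx.Tw y)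
        = ∑ y ∈ SF, ∑ x' ∈ FF,
            ((-1 : A) ^ cs.length w * LaurentPolynomial.T (-2 * (cs.length w : ℤ)) *
              ((-1 : A) ^ cs.length y * Polynomial.aeval q (Ctx.R y w)) *
              Polynomial.aeval q (Ctx.D x' y)) • Ctx.proj (Ctx.Tw x') := by
          refine Finset.sum_congr rfl (fun y hy => ?_)
          rw [e2 y (by rw [hSF, Set.Finite.mem_toFinset] at hy; exact hy), Finset.smul_sum]
          exact Finset.sum_congr rfl (fun x' _ => by rw [smul_smul, mul_assoc])
      _ = ∑ x' ∈ FF, ∑ y ∈ SF,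
            ((-1 : A) ^ cs.length w * LaurentPolynomial.T (-2 * (cs.length w : ℤ)) *
              ((-1 : A) ^ cs.length y * Polynomial.aeval q (Ctx.R y w)) *
              Polynomial.aeval q (Ctx.D x' y)) • Ctx.proj (Ctx.Tw x') := Finset.sum_comm
      _ = ∑ x' ∈ FF, (∑ y ∈ SF,
            ((-1 : A) ^ cs.length w * LaurentPolynomial.T (-2 * (cs.length w : ℤ)) *
              ((-1 : A) ^ cs.length y * Polynomial.aeval q (Ctx.R y w)) *
              Polynomial.aeval q (Ctx.D x' y))) • Ctx.proj (Ctx.Tw x') :=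
          Finset.sum_congr rfl (fun x' _ => (Finset.sum_smul).symm)
  -- Step 4: expand `proj (Tinv w⁻¹)` via the a-polynomials
  have e4 : Ctx.proj (Ctx.Tinv w⁻¹) = ∑ x' ∈ FF,
      ((LaurentPolynomial.T (-2 * (cs.length w : ℤ)) : A) *
        Polynomial.aeval q (Ctx.apol x' w)) • Ctx.proj (Ctx.Tw x') := by
    rw [Ctx.apol_eq w hw, finsum_mem_eq_finite_toFinset_sum _ hFcset, Finset.smul_sum]
    simp only [smul_smul]
    rfl
  -- Step 5: coefficient extraction
  have hxFF : x ∈ FF := by rw [hFF, Set.Finite.mem_toFinset]; exact ⟨hx, hxw⟩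
  have h0 : ∑ x' ∈ FF,
      ((LaurentPolynomial.T (-2 * (cs.length w : ℤ)) : A) * Polynomial.aeval q (Ctx.apol x' w)
        - ∑ y ∈ SF, ((-1 : A) ^ cs.length w * LaurentPolynomial.T (-2 * (cs.length w : ℤ)) *
            ((-1 : A) ^ cs.length y * Polynomial.aeval q (Ctx.R y w)) *
            Polynomial.aeval q (Ctx.D x' y))) • Ctx.proj (Ctx.Tw x') = 0 := by
    simp only [sub_smul, Finset.sum_sub_distrib, ← e3, ← e4, sub_self]
  have hkey := coeff_ext Ctx FF (fun x' hx' => by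
      rw [hFF, Set.Finite.mem_toFinset] at hx'; exact hx'.1) _ h0 x hxFF
  rw [sub_eq_zero] at hkey
  -- Step 6: cancel the invertible factor `T (-2 ℓ(w))`
  have hT : (LaurentPolynomial.T (2 * (cs.length w : ℤ)) : A) *
      LaurentPolynomial.T (-2 * (cs.length w : ℤ)) = 1 := by
    rw [← LaurentPolynomial.T_add]
    norm_num
  have hkey2 : Polynomial.aeval q (Ctx.apol x w) = ∑ y ∈ SF,
      ((-1 : A) ^ cs.length y * (-1 : A) ^ cs.length w * Polynomial.aeval q (Ctx.R y w) *
        Polynomial.aeval q (Ctx.D x y)) := by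
    calc Polynomial.aeval q (Ctx.apol x w)
        = (LaurentPolynomial.T (2 * (cs.length w : ℤ)) : A) *
            ((LaurentPolynomial.T (-2 * (cs.length w : ℤ)) : A) *
              Polynomial.aeval q (Ctx.apol x w)) := by
          rw [← mul_assoc, hT, one_mul]
      _ = (LaurentPolynomial.T (2 * (cs.length w : ℤ)) : A) *
            ∑ y ∈ SF, ((-1 : A) ^ cs.length w * LaurentPolynomial.T (-2 * (cs.length w : ℤ)) *
              ((-1 : A) ^ cs.length y * Polynomial.aeval q (Ctx.R y w)) *
              Polynomial.aeval q (Ctx.D x y)) := by rw [hkey]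
      _ = ∑ y ∈ SF, ((-1 : A) ^ cs.length y * (-1 : A) ^ cs.length w *
            Polynomial.aeval q (Ctx.R y w) * Polynomial.aeval q (Ctx.D x y)) := by
          rw [Finset.mul_sum]
          refine Finset.sum_congr rfl (fun y _ => ?_)
          calc (LaurentPolynomial.T (2 * (cs.length w : ℤ)) : A) *
              ((-1 : A) ^ cs.length w * LaurentPolynomial.T (-2 * (cs.length w : ℤ)) *
                ((-1 : A) ^ cs.length y * Polynomial.aeval q (Ctx.R y w)) *
                Polynomial.aeval q (Ctx.D x y))
              = ((LaurentPolynomial.T (2 * (cs.length w : ℤ)) : A) *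
                  LaurentPolynomial.T (-2 * (cs.length w : ℤ))) *
                ((-1 : A) ^ cs.length y * (-1 : A) ^ cs.length w *
                  Polynomial.aeval q (Ctx.R y w) * Polynomial.aeval q (Ctx.D x y)) := by
                ring
            _ = _ := by rw [hT, one_mul]
  -- Step 7: descend to the polynomial level
  have hpoly : Polynomial.aeval q (Ctx.apol x w) = Polynomial.aeval q
      (∑ y ∈ SF, ((-1 : Polynomial ℤ) ^ cs.length y * (-1 : Polynomial ℤ) ^ cs.length w *
        Ctx.R y w * Ctx.D x y)) := by
    rw [hkey2, map_sum]
    exact Finset.sum_congr rfl (fun y _ => by simp [map_mul, map_pow])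
  have hpol : Ctx.apol x w = ∑ y ∈ SF, ((-1 : Polynomial ℤ) ^ cs.length y *
      (-1 : Polynomial ℤ) ^ cs.length w * Ctx.R y w * Ctx.D x y) :=
    aeval_q_injective hpoly
  rw [hpol]
  -- Step 8: split the sum
  have hxSF : x ∈ SF := by rw [hSF, Set.Finite.mem_toFinset]; exact hxw
  rw [← Finset.add_sum_erase SF _ hxSF]
  congr 1
  · rw [Ctx.D_self x hx, mul_one]
  · have hbadfin : {y | ¬ FullyCommutative cs y ∧ bruhatLT cs x y ∧ bruhatLT cs y w}.Finite :=
      hSw.subset (fun y h => h.2.2.1)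
    rw [finsum_mem_eq_finite_toFinset_sum _ hbadfin]
    refine (Finset.sum_subset ?_ ?_).symm
    · intro y hy
      rw [Set.Finite.mem_toFinset] at hy
      rw [Finset.mem_erase, hSF, Set.Finite.mem_toFinset]
      exact ⟨Ne.symm hy.2.1.2, hy.2.2.1⟩
    · intro y hy hyn
      rw [Finset.mem_erase, hSF, Set.Finite.mem_toFinset] at hy
      rw [Set.Finite.mem_toFinset] at hyn
      have hD : Ctx.D x y = 0 := by
        by_cases hfc : FullyCommutative cs y
        · exact D_vanish Ctx hfc (Ne.symm hy.1)
        · by_cases hle : bruhatLE cs x y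
          · exact absurd ⟨hfc, ⟨hle, Ne.symm hy.1⟩,
              ⟨hy.2, fun h => hfc (by rw [h]; exact hw)⟩⟩ hyn
          · exact Ctx.D_eq_zero x y (fun h => hle h.2)
      rw [hD, mul_zero]

end TLPaper
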